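/- For all positive integers b and k, the expected maximum of a uniformly random ±1-step walk of length kb is at most k times the expected maximum of a uniformly random ±1-step walk of length b; that is, 2^{−kb}·∑_{m=0}^{kb} m·f(m,kb) ≤ k · 2^{−b}·∑_{m=0}^{b} m·f(m,b). (Equivalently: on the line, many short bursts of length b are never worse in expectation than fewer bursts of length kb, for the same total number of steps.) -/

import Mathlib

/-- The value of a ±1 step: `true` is a rightward step (+1), `false` a leftward step (−1). -/
def stepVal (x : Bool) : ℤ := if x then 1 else -1

/-- The position after `k` steps (partial sum `S_k`) of the walk with steps `ε`. -/
def partialSum {b : ℕ} (ε : Fin b → Bool) (k : ℕ) : ℤ :=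
  ∑ i : Fin b, if (i : ℕ) < k then stepVal (ε i) else 0

/-- The maximum attained position `max { S_k : 0 ≤ k ≤ b }` of the walk with steps `ε`,
started at 0. -/
def walkMax {b : ℕ} (ε : Fin b → Bool) : ℤ :=
  (Finset.range (b + 1)).sup' Finset.nonempty_range_add_one (partialSum ε)

/-- `f m b` : the number of ±1-step walks of length `b` starting at 0 whose maximum
attained position equals `m`. -/
def f (m : ℤ) (b : ℕ) : ℕ :=
  (Finset.univ.filter (fun ε : Fin b → Bool => walkMax ε = m)).card



def gstep {n : ℕ} (ε : Fin n → Bool) (i : ℕ) : ℤ :=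
  if h : i < n then stepVal (ε ⟨i, h⟩) else 0

lemma partialSum_eq_range {n : ℕ} (ε : Fin n → Bool) (t : ℕ) :
    partialSum ε t = ∑ i ∈ Finset.range t, gstep ε i := by
  induction t with
  | zero => simp [partialSum]
  | succ t ih =>
    rw [Finset.sum_range_succ, ← ih]
    unfold partialSum gstep
    by_cases h : t < n
    · rw [dif_pos h]
      have : ∀ i : Fin n, (if (i : ℕ) < t + 1 then stepVal (ε i) else 0)
          = (if (i : ℕ) < t then stepVal (ε i) else 0)
            + (if i = (⟨t, h⟩ : Fin n) then stepVal (ε i) else 0) := by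
        intro i
        rcases lt_trichotomy (i : ℕ) t with h1 | h1 | h1
        · rw [if_pos (by omega), if_pos h1, if_neg (by
            intro he; rw [he] at h1; simp at h1), add_zero]
        · rw [if_pos (by omega), if_neg (by omega), if_pos (by
            apply Fin.ext; exact h1), zero_add]
        · rw [if_neg (by omega), if_neg (by omega), if_neg (by
            intro he; rw [he] at h1; simp at h1), add_zero]
      rw [Finset.sum_congr rfl (fun i _ => this i), Finset.sum_add_distrib,
        Finset.sum_ite_eq' Finset.univ (⟨t, h⟩ : Fin n) (fun i => stepVal (ε i))]
      simp
    · rw [dif_neg h, add_zero]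
      apply Finset.sum_congr rfl
      intro i _
      have : (i : ℕ) < t := by omega
      rw [if_pos (by omega), if_pos this]

lemma partialSum_zero {n : ℕ} (ε : Fin n → Bool) : partialSum ε 0 = 0 := by
  simp [partialSum]

lemma partialSum_le_walkMax {n : ℕ} (ε : Fin n → Bool) {t : ℕ} (ht : t ≤ n) :
    partialSum ε t ≤ walkMax ε :=
  Finset.le_sup' (partialSum ε) (Finset.mem_range.mpr (by omega))

lemma walkMax_nonneg {n : ℕ} (ε : Fin n → Bool) : 0 ≤ walkMax ε := by
  have := partialSum_le_walkMax ε (Nat.zero_le n)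
  rwa [partialSum_zero] at this

lemma walkMax_le {n : ℕ} (ε : Fin n → Bool) : walkMax ε ≤ n := by
  apply Finset.sup'_le
  intro t _
  unfold partialSum
  calc ∑ i : Fin n, (if (i : ℕ) < t then stepVal (ε i) else 0)
      ≤ ∑ _i : Fin n, (1 : ℤ) := by
        apply Finset.sum_le_sum
        intro i _
        by_cases h : (i : ℕ) < t
        · rw [if_pos h]; unfold stepVal; split <;> omega
        · rw [if_neg h]; omega
    _ = n := by simp


/-- the `j`-th block (length `b`) of a walk of length `k*b`; junk `false` out of range. -/
def blockW {n : ℕ} (b : ℕ) (ε : Fin n → Bool) (j : ℕ) : Fin b → Bool :=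
  fun i => if h : j * b + i < n then ε ⟨j * b + i, h⟩ else false

lemma gstep_blockW {k b : ℕ} (ε : Fin (k * b) → Bool) {j : ℕ} (hj : j < k) (i : ℕ)
    (hi : i < b) : gstep (blockW b ε j) i = gstep ε (j * b + i) := by
  have hlt : j * b + i < k * b := by
    have h1 : j * b + i < (j + 1) * b := by rw [add_mul, one_mul]; omega
    exact h1.trans_le (Nat.mul_le_mul_right b hj)
  rw [gstep, dif_pos hi, gstep, dif_pos hlt, blockW]
  simp [hlt]

lemma partialSum_blockW {k b : ℕ} (ε : Fin (k * b) → Bool) {j : ℕ} (hj : j < k)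
    {s : ℕ} (hs : s ≤ b) :
    partialSum (blockW b ε j) s = ∑ i ∈ Finset.range s, gstep ε (j * b + i) := by
  rw [partialSum_eq_range]
  exact Finset.sum_congr rfl fun i hi =>
    gstep_blockW ε hj i (by have := Finset.mem_range.mp hi; omega)

lemma sum_full_blocks {k b : ℕ} (ε : Fin (k * b) → Bool) {j : ℕ} (hj : j ≤ k) :
    ∑ i ∈ Finset.range (j * b), gstep ε i
      ≤ ∑ i ∈ Finset.range j, walkMax (blockW b ε i) := by
  induction j with
  | zero => simp
  | succ j ih =>
    rw [Nat.succ_mul, Finset.sum_range_add, Finset.sum_range_succ]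
    have h1 : ∑ i ∈ Finset.range b, gstep ε (j * b + i) ≤ walkMax (blockW b ε j) := by
      rw [← partialSum_blockW ε (by omega) le_rfl]
      exact partialSum_le_walkMax _ le_rfl
    have h2 := ih (by omega)
    omega

lemma key {k b : ℕ} (hb : 0 < b) (hk : 0 < k) (ε : Fin (k * b) → Bool) :
    walkMax ε ≤ ∑ j ∈ Finset.range k, walkMax (blockW b ε j) := by
  apply Finset.sup'_le
  intro t ht
  have ht' : t ≤ k * b := by have := Finset.mem_range.mp ht; omega
  obtain ⟨j, hj, s, hs, rfl⟩ : ∃ j < k, ∃ s ≤ b, t = j * b + s := by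
    rcases eq_or_lt_of_le ht' with h | h
    · refine ⟨k - 1, by omega, b, le_rfl, ?_⟩
      rw [h]
      cases k with
      | zero => omega
      | succ k => simp [Nat.succ_mul]
    · exact ⟨t / b, (Nat.div_lt_iff_lt_mul hb).mpr (by omega), t % b,
        (Nat.mod_lt _ hb).le, (Nat.div_add_mod' t b).symm⟩
  rw [partialSum_eq_range, Finset.sum_range_add,
    ← partialSum_blockW ε hj hs]
  have h1 := sum_full_blocks ε (le_of_lt hj)
  have h2 : partialSum (blockW b ε j) s ≤ walkMax (blockW b ε j) :=
    partialSum_le_walkMax _ hs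
  have h3 : ∑ i ∈ Finset.range j, walkMax (blockW b ε i) + walkMax (blockW b ε j)
      ≤ ∑ i ∈ Finset.range k, walkMax (blockW b ε i) := by
    rw [← Finset.sum_range_succ]
    apply Finset.sum_le_sum_of_subset_of_nonneg
    · exact Finset.range_subset_range.mpr (by omega)
    · exact fun i _ _ => walkMax_nonneg _
  omega

/-- walks of length `k*b` as `k` independent blocks of length `b`. -/
def blocksEquiv (k b : ℕ) (hb : 0 < b) : (Fin k → Fin b → Bool) ≃ (Fin (k * b) → Bool) where
  toFun F i := F ⟨(i : ℕ) / b, by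
      have := i.2; exact (Nat.div_lt_iff_lt_mul hb).mpr (by omega)⟩
    ⟨(i : ℕ) % b, Nat.mod_lt _ hb⟩
  invFun ε j i := ε ⟨(j : ℕ) * b + i, by
      have h1 : (j : ℕ) * b + i < ((j : ℕ) + 1) * b := by rw [add_mul, one_mul]; have := i.2; omega
      exact h1.trans_le (Nat.mul_le_mul_right b j.2)⟩
  left_inv F := by
    funext j i
    simp only []
    congr 1
    · apply Fin.ext
      show ((j : ℕ) * b + i) / b = j
      rw [mul_comm, Nat.mul_add_div hb, Nat.div_eq_of_lt i.2, add_zero]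
    · apply Fin.ext
      show ((j : ℕ) * b + i) % b = i
      rw [mul_comm, Nat.mul_add_mod, Nat.mod_eq_of_lt i.2]
  right_inv ε := by
    funext i
    simp only []
    congr 1
    apply Fin.ext
    show (i : ℕ) / b * b + (i : ℕ) % b = i
    exact Nat.div_add_mod' _ _

lemma blockW_blocksEquiv {k b : ℕ} (hb : 0 < b) (F : Fin k → Fin b → Bool) (j : Fin k) :
    blockW b (blocksEquiv k b hb F) (j : ℕ) = F j := by
  funext i
  have hlt : (j : ℕ) * b + i < k * b := by
    have h1 : (j : ℕ) * b + i < ((j : ℕ) + 1) * b := by rw [add_mul, one_mul]; have := i.2; omega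
    exact h1.trans_le (Nat.mul_le_mul_right b j.2)
  rw [blockW, dif_pos hlt]
  show F ⟨((j : ℕ) * b + i) / b, _⟩ ⟨((j : ℕ) * b + i) % b, _⟩ = F j i
  congr 1
  · apply Fin.ext
    show ((j : ℕ) * b + i) / b = j
    rw [mul_comm, Nat.mul_add_div hb, Nat.div_eq_of_lt i.2, add_zero]
  · apply Fin.ext
    show ((j : ℕ) * b + i) % b = i
    rw [mul_comm, Nat.mul_add_mod, Nat.mod_eq_of_lt i.2]

lemma sum_eval {k b : ℕ} (j : Fin k) :
    ∑ F : Fin k → Fin b → Bool, walkMax (F j)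
      = (2 ^ b) ^ (k - 1) * ∑ η : Fin b → Bool, walkMax η := by
  have h := Equiv.sum_comp (Equiv.piSplitAt j (fun _ : Fin k => Fin b → Bool)).symm
    (fun F : Fin k → Fin b → Bool => walkMax (F j))
  rw [← h]
  have h2 : ∀ p : (Fin b → Bool) × ({i : Fin k // i ≠ j} → Fin b → Bool),
      ((Equiv.piSplitAt j (fun _ : Fin k => Fin b → Bool)).symm p) j = p.1 := by
    intro p
    rw [Equiv.piSplitAt_symm_apply, dif_pos rfl]
  rw [Fintype.sum_prod_type]
  calc ∑ x : Fin b → Bool, ∑ y : {i : Fin k // i ≠ j} → Fin b → Bool,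
        walkMax (((Equiv.piSplitAt j (fun _ : Fin k => Fin b → Bool)).symm (x, y)) j)
      = ∑ x : Fin b → Bool, ∑ _y : {i : Fin k // i ≠ j} → Fin b → Bool, walkMax x := by
        refine Finset.sum_congr rfl fun x _ => Finset.sum_congr rfl fun y _ => ?_
        rw [h2 (x, y)]
    _ = (2 ^ b) ^ (k - 1) * ∑ η : Fin b → Bool, walkMax η := by
        rw [Finset.mul_sum]
        refine Finset.sum_congr rfl fun x _ => ?_
        rw [Finset.sum_const, nsmul_eq_mul, Finset.card_univ]
        congr 1
        rw [Fintype.card_fun]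
        push_cast
        congr 2
        · simp [Fintype.card_fun]
        · simp [Fintype.card_subtype_compl]

lemma total {k b : ℕ} (hb : 0 < b) (hk : 0 < k) :
    ∑ ε : Fin (k * b) → Bool, walkMax ε
      ≤ (k : ℤ) * (2 ^ b) ^ (k - 1) * ∑ η : Fin b → Bool, walkMax η := by
  calc ∑ ε : Fin (k * b) → Bool, walkMax ε
      ≤ ∑ ε : Fin (k * b) → Bool, ∑ j ∈ Finset.range k, walkMax (blockW b ε j) :=
        Finset.sum_le_sum fun ε _ => key hb hk ε
    _ = ∑ F : Fin k → Fin b → Bool, ∑ j ∈ Finset.range k,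
          walkMax (blockW b (blocksEquiv k b hb F) j) :=
        (Equiv.sum_comp (blocksEquiv k b hb)
          (fun ε => ∑ j ∈ Finset.range k, walkMax (blockW b ε j))).symm
    _ = ∑ F : Fin k → Fin b → Bool, ∑ j : Fin k, walkMax (F j) := by
        refine Finset.sum_congr rfl fun F _ => ?_
        rw [← Fin.sum_univ_eq_sum_range (fun j => walkMax (blockW b (blocksEquiv k b hb F) j)) k]
        exact Finset.sum_congr rfl fun j _ => by rw [blockW_blocksEquiv hb F j]
    _ = ∑ j : Fin k, ∑ F : Fin k → Fin b → Bool, walkMax (F j) := Finset.sum_comm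
    _ = ∑ _j : Fin k, ((2 ^ b) ^ (k - 1) * ∑ η : Fin b → Bool, walkMax η : ℤ) :=
        Finset.sum_congr rfl fun j _ => sum_eval j
    _ = (k : ℤ) * (2 ^ b) ^ (k - 1) * ∑ η : Fin b → Bool, walkMax η := by
        rw [Finset.sum_const, Finset.card_univ, Fintype.card_fin, nsmul_eq_mul, mul_assoc]

lemma sum_mul_f (n : ℕ) :
    ∑ m ∈ Finset.range (n + 1), (m : ℚ) * (f m n : ℚ)
      = ((∑ ε : Fin n → Bool, walkMax ε : ℤ) : ℚ) := by
  push_cast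
  rw [← Finset.sum_fiberwise_of_maps_to (g := fun ε : Fin n → Bool => (walkMax ε).toNat)
    (t := Finset.range (n + 1))
    (fun ε _ => Finset.mem_range.mpr (by
      show (walkMax ε).toNat < n + 1
      have h1 := walkMax_nonneg ε; have h2 := walkMax_le ε; omega))
    (fun ε => ((walkMax ε : ℤ) : ℚ))]
  apply Finset.sum_congr rfl
  intro m hm
  have hcard : (Finset.filter (fun ε : Fin n → Bool => (walkMax ε).toNat = m)
      Finset.univ) = Finset.filter (fun ε : Fin n → Bool => walkMax ε = (m : ℤ))
      Finset.univ := by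
    apply Finset.filter_congr
    intro ε _
    have h1 := walkMax_nonneg ε
    constructor <;> intro h <;> omega
  calc (m : ℚ) * (f (m : ℤ) n : ℚ)
      = ∑ _ε ∈ Finset.filter (fun ε : Fin n → Bool => (walkMax ε).toNat = m)
          Finset.univ, (m : ℚ) := by
        rw [Finset.sum_const, hcard, f, nsmul_eq_mul, mul_comm]
    _ = ∑ ε ∈ Finset.filter (fun ε : Fin n → Bool => (walkMax ε).toNat = m)
          Finset.univ, ((walkMax ε : ℤ) : ℚ) := by
        apply Finset.sum_congr rfl
        intro ε hε
        have h2 : (walkMax ε).toNat = m := by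
          simpa using (Finset.mem_filter.mp hε).2
        have h1 := walkMax_nonneg ε
        have h3 : walkMax ε = (m : ℤ) := by omega
        rw [h3]; simp

/-- Many short bursts are never worse in expectation than fewer long bursts: for
positive integers `b` and `k`, the expected maximum of a uniformly random ±1-step walk
of length `k·b` is at most `k` times the expected maximum of a walk of length `b`. -/
theorem shorter_bursts_better (b k : ℕ) (hb : 0 < b) (hk : 0 < k) :
    (∑ m ∈ Finset.range (k * b + 1), (m : ℚ) * (f m (k * b) : ℚ)) / 2 ^ (k * b)
      ≤ (k : ℚ) * ((∑ m ∈ Finset.range (b + 1), (m : ℚ) * (f m b : ℚ)) / 2 ^ b) := by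
  rw [sum_mul_f (k * b), sum_mul_f b]
  set T : ℤ := ∑ ε : Fin (k * b) → Bool, walkMax ε with hT
  set S : ℤ := ∑ η : Fin b → Bool, walkMax η with hS
  have htot : (T : ℚ) ≤ (k : ℚ) * (2 ^ b) ^ (k - 1) * (S : ℚ) := by
    have := total hb hk
    rw [← hT, ← hS] at this
    exact_mod_cast this
  rw [div_le_iff₀ (by positivity)]
  calc (T : ℚ) ≤ (k : ℚ) * (2 ^ b) ^ (k - 1) * (S : ℚ) := htot
    _ = (k : ℚ) * ((S : ℚ) / 2 ^ b) * 2 ^ (k * b) := by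
      have h2 : (2 : ℚ) ^ (k * b) = (2 ^ b) ^ (k - 1) * 2 ^ b := by
        rw [← pow_succ, Nat.sub_add_cancel hk, ← pow_mul, mul_comm b k]
      rw [h2]
      field_simp
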